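/- Let (E, J, M) be a double factorization system on a category C with finite products and terminal object. If A is a (J·E)-local object of C, then the diagonal monomorphism Δ_A = (1_A, 1_A) : A → A × A belongs to M. Conversely, if Δ_A belongs to M, then A is a (J·E)-separating object of C. -/

import Mathlib

open CategoryTheory CategoryTheory.Limits

universe v u v₂ u₂

namespace DFS

variable {C : Type u} [Category.{v} C]

/-- `f` is (left) orthogonal to `g`: every commutative square from `f` to `g`
admits a unique diagonal filler. -/
def Orth {A B X Y : C} (f : A ⟶ B) (g : X ⟶ Y) : Prop :=
  ∀ (u : A ⟶ X) (v : B ⟶ Y), u ≫ g = f ≫ v → ∃! h : B ⟶ X, f ≫ h = u ∧ h ≫ g = v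

/-- Mutual orthogonality of two classes of morphisms. -/
def ClassOrth (L R : MorphismProperty C) : Prop :=
  ∀ ⦃A B X Y : C⦄ (f : A ⟶ B) (g : X ⟶ Y), L f → R g → Orth f g

/-- The class `R·L` of composites `e ≫ m` with `e ∈ L` and `m ∈ R`. -/
def Comp (R L : MorphismProperty C) : MorphismProperty C :=
  fun X Y f => ∃ (Z : C) (e : X ⟶ Z) (m : Z ⟶ Y), L e ∧ R m ∧ e ≫ m = f

/-- An object `X` is `L`-local if precomposition with every member of `L` is a
bijection of hom-sets into `X`. -/
def IsLocal (L : MorphismProperty C) (X : C) : Prop :=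
  ∀ ⦃A B : C⦄ (m : A ⟶ B), L m → Function.Bijective (fun g : B ⟶ X => m ≫ g)

/-- An object `X` is `L`-separating if precomposition with every member of `L` is an
injection of hom-sets into `X`. -/
def IsSeparating (L : MorphismProperty C) (X : C) : Prop :=
  ∀ ⦃A B : C⦄ (m : A ⟶ B), L m → Function.Injective (fun g : B ⟶ X => m ≫ g)

/-- A double (orthogonal) factorization system. -/
structure IsDFS (E J M : MorphismProperty C) : Prop where
  postcomp_iso_E : ∀ ⦃A B B' : C⦄ (e : A ⟶ B) (i : B ⟶ B'), IsIso i → E e → E (e ≫ i)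
  comp_iso_J : ∀ ⦃A' A B B' : C⦄ (i : A' ⟶ A) (j : A ⟶ B) (i' : B ⟶ B'),
      IsIso i → IsIso i' → J j → J (i ≫ j ≫ i')
  precomp_iso_M : ∀ ⦃A' A B : C⦄ (i : A' ⟶ A) (m : A ⟶ B), IsIso i → M m → M (i ≫ m)
  fac : ∀ ⦃X Y : C⦄ (f : X ⟶ Y), ∃ (A B : C) (e : X ⟶ A) (j : A ⟶ B) (m : B ⟶ Y),
      E e ∧ J j ∧ M m ∧ e ≫ j ≫ m = f
  lift : ∀ ⦃A B B'' D D' F' : C⦄ (e : A ⟶ B) (j : B ⟶ B'') (j' : D ⟶ D') (m : D' ⟶ F')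
      (u : A ⟶ D) (v : B'' ⟶ F'), E e → J j → J j' → M m →
      e ≫ j ≫ v = u ≫ j' ≫ m →
      ∃! st : (B ⟶ D) × (B'' ⟶ D'),
        e ≫ st.1 = u ∧ st.1 ≫ j' = j ≫ st.2 ∧ st.2 ≫ m = v

/-- An (orthogonal) factorization system. -/
structure IsFS (L R : MorphismProperty C) : Prop where
  fac : ∀ ⦃X Y : C⦄ (f : X ⟶ Y), ∃ (Z : C) (e : X ⟶ Z) (m : Z ⟶ Y), L e ∧ R m ∧ e ≫ m = f
  left_iff : ∀ ⦃A B : C⦄ (f : A ⟶ B), L f ↔ ∀ ⦃X Y : C⦄ (g : X ⟶ Y), R g → Orth f g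
  right_iff : ∀ ⦃X Y : C⦄ (g : X ⟶ Y), R g ↔ ∀ ⦃A B : C⦄ (f : A ⟶ B), L f → Orth f g

/-- Stability of a class of morphisms under pullback. -/
def StableUnderPB (P : MorphismProperty C) : Prop :=
  ∀ ⦃A B A' B' : C⦄ (f : A ⟶ B) (g : B' ⟶ B) (f' : A' ⟶ B') (h : A' ⟶ A),
    IsPullback h f' f g → P f → P f'

/-- A left Quillen functor between categories equipped with dfs's: it maps
trivial cofibrations to trivial cofibrations and cofibrations to cofibrations. -/
def LeftQuillen {D : Type u₂} [Category.{v₂} D]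
    (EC JC : MorphismProperty C) (ED JD : MorphismProperty D) (F : C ⥤ D) : Prop :=
  (∀ ⦃A B : C⦄ (f : A ⟶ B), EC f → ED (F.map f)) ∧
  (∀ ⦃A B : C⦄ (f : A ⟶ B), Comp JC EC f → Comp JD ED (F.map f))

end DFS

namespace DFS

variable {C : Type u} [Category.{v} C]

/-- In a dfs, every isomorphism belongs to `J`. -/
lemma iso_mem_J {E J M : MorphismProperty C} (h : IsDFS E J M)
    {X Y : C} (f : X ⟶ Y) (hf : IsIso f) : J f := by
  obtain ⟨P, Q, e, j, m, hE, hJ, hM, hfac⟩ := h.fac (𝟙 X)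
  obtain ⟨⟨s, t⟩, _, huniq⟩ := h.lift e j j m e m hE hJ hJ hM rfl
  have h1 : ((𝟙 P, 𝟙 Q) : (P ⟶ P) × (Q ⟶ Q)) = (s, t) := by
    apply huniq; simp
  have h2 : ((j ≫ m ≫ e, m ≫ e ≫ j) : (P ⟶ P) × (Q ⟶ Q)) = (s, t) := by
    apply huniq
    refine ⟨?_, by simp, ?_⟩
    · rw [show e ≫ j ≫ m ≫ e = (e ≫ j ≫ m) ≫ e by simp, hfac, Category.id_comp]
    · rw [show (m ≫ e ≫ j) ≫ m = m ≫ (e ≫ j ≫ m) by simp, hfac, Category.comp_id]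
  have h3 : j ≫ m ≫ e = 𝟙 P ∧ m ≫ e ≫ j = 𝟙 Q := by
    have h4 := h2.trans h1.symm
    exact ⟨congrArg Prod.fst h4, congrArg Prod.snd h4⟩
  have he : IsIso e := ⟨j ≫ m, by simpa using hfac, by simpa using h3.1⟩
  have hm' : IsIso m := by
    refine ⟨e ≫ j, by simpa using h3.2, by simpa using hfac⟩
  have hmf : IsIso (m ≫ f) := by
    have := hf
    infer_instance
  have := h.comp_iso_J e j (m ≫ f) he hmf hJ
  rwa [show e ≫ j ≫ m ≫ f = (e ≫ j ≫ m) ≫ f by simp, hfac, Category.id_comp] at this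

/-- In a dfs, composites `e ≫ j` with `e ∈ E`, `j ∈ J` are left orthogonal to `M`. -/
lemma comp_orth_M {E J M : MorphismProperty C} (h : IsDFS E J M)
    {X Y Z D F : C} (e : X ⟶ Y) (j : Y ⟶ Z) (m : D ⟶ F)
    (hE : E e) (hJ : J j) (hM : M m) : Orth (e ≫ j) m := by
  intro u v huv
  have hid : J (𝟙 D) := iso_mem_J h (𝟙 D) inferInstance
  obtain ⟨⟨s, t⟩, ⟨h1, h2, h3⟩, huniq⟩ :=
    h.lift e j (𝟙 D) m u v hE hJ hid hM (by simpa using huv.symm)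
  simp only [Category.comp_id] at h2
  refine ⟨t, ⟨by rw [Category.assoc, ← h2, h1], h3⟩, ?_⟩
  intro t' ⟨ht1, ht2⟩
  have := huniq (j ≫ t', t') ⟨by simpa using ht1, by simp, ht2⟩
  exact congrArg Prod.snd this

end DFS

/-- For a dfs `(E, J, M)` on a category with finite products and a
terminal object: if `A` is `(J·E)`-local then the diagonal `Δ_A : A ⟶ A ⨯ A` lies in
`M`; conversely if the diagonal lies in `M` then `A` is `(J·E)`-separating. -/
theorem statement8 {C : Type u} [Category.{v} C] [HasTerminal C] [HasBinaryProducts C]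
    (E J M : MorphismProperty C) (h : DFS.IsDFS E J M) (A : C) :
    (DFS.IsLocal (DFS.Comp J E) A → M (prod.lift (𝟙 A) (𝟙 A))) ∧
    (M (prod.lift (𝟙 A) (𝟙 A)) → DFS.IsSeparating (DFS.Comp J E) A) := by
  constructor
  · -- locality implies the diagonal is in M
    intro hloc
    obtain ⟨B, B'', e, j, m, hE, hJ, hM, hfac⟩ := h.fac (prod.lift (𝟙 A) (𝟙 A))
    have hk : DFS.Comp J E (e ≫ j) := ⟨B, e, j, hE, hJ, rfl⟩
    have hbij := hloc (e ≫ j) hk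
    obtain ⟨r, hr⟩ := hbij.2 (𝟙 A)
    simp only at hr
    have hkm : (e ≫ j) ≫ m = prod.lift (𝟙 A) (𝟙 A) := by
      rw [Category.assoc, hfac]
    have hfst : m ≫ prod.fst = r := by
      apply hbij.1
      show (e ≫ j) ≫ m ≫ prod.fst = (e ≫ j) ≫ r
      rw [← Category.assoc, hkm, hr]
      exact prod.lift_fst _ _
    have hsnd : m ≫ prod.snd = r := by
      apply hbij.1
      show (e ≫ j) ≫ m ≫ prod.snd = (e ≫ j) ≫ r
      rw [← Category.assoc, hkm, hr]
      exact prod.lift_snd _ _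
    have hrΔ : r ≫ prod.lift (𝟙 A) (𝟙 A) = m := by
      apply Limits.prod.hom_ext
      · simp [hfst, hsnd]; exact prod.lift_fst _ _
      · simp [hfst, hsnd]; exact prod.lift_snd _ _
    obtain ⟨⟨s, t⟩, _, huniq⟩ := h.lift e j j m e m hE hJ hJ hM rfl
    have h1 : ((𝟙 B, 𝟙 B'') : (B ⟶ B) × (B'' ⟶ B'')) = (s, t) := by
      apply huniq; simp
    have h2 : ((j ≫ r ≫ e, r ≫ e ≫ j) : (B ⟶ B) × (B'' ⟶ B'')) = (s, t) := by
      apply huniq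
      refine ⟨?_, by simp, ?_⟩
      · rw [show e ≫ j ≫ r ≫ e = ((e ≫ j) ≫ r) ≫ e by simp, hr, Category.id_comp]
      · rw [show (r ≫ e ≫ j) ≫ m = r ≫ (e ≫ j) ≫ m by simp, hkm, hrΔ]
    have hrk : r ≫ e ≫ j = 𝟙 B'' := by
      have := congrArg Prod.snd (h2.trans h1.symm)
      simpa using this
    have hiso : IsIso (e ≫ j) := ⟨r, hr, by simpa using hrk⟩
    have := h.precomp_iso_M (e ≫ j) m hiso hM
    rwa [hkm] at this
  · -- diagonal in M implies separation
    intro hΔ X Z f hf g₁ g₂ hg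
    obtain ⟨Y, e, j, hE, hJ, hcomp⟩ := hf
    simp only at hg
    have horth := DFS.comp_orth_M h e j (prod.lift (𝟙 A) (𝟙 A)) hE hJ hΔ
    have hsq : (f ≫ g₁) ≫ prod.lift (𝟙 A) (𝟙 A) = (e ≫ j) ≫ prod.lift g₁ g₂ := by
      rw [hcomp]
      apply Limits.prod.hom_ext
      · simp; exact (prod.lift_fst _ _).trans (prod.lift_fst _ _).symm
      · simp [hg]
    obtain ⟨t, ⟨_, ht2⟩, _⟩ := horth (f ≫ g₁) (prod.lift g₁ g₂) hsq
    have e1 : t = g₁ := by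
      have := congrArg (fun x => x ≫ (prod.fst : A ⨯ A ⟶ A)) ht2
      simp at this
      exact (prod.lift_fst t t).symm.trans (this.trans (prod.lift_fst g₁ g₂))
    have e2 : t = g₂ := by
      have := congrArg (fun x => x ≫ (prod.snd : A ⨯ A ⟶ A)) ht2
      simp at this
      exact (prod.lift_snd t t).symm.trans (this.trans (prod.lift_snd g₁ g₂))
    rw [← e1, ← e2]
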